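/- In the CFI construction over the complete graph K_k, for every subset F ⊆ E(K_k) there is exactly one automorphism h_F of the enlarged graph X(K_k) that flips precisely the edge-vertex pairs e^0, e^1 for e ∈ F; it is given by h_F(e^i) = e^{1-i} for e ∈ F, h_F(e^i) = e^i for e ∉ F, and h_F(v^X) = v^{X △ (F ∩ E(v))}. -/

import Mathlib

open scoped Classical

/-- Vertices of the CFI-enlarged graph `X(K_k)` over the complete graph on `Fin k`:
"node vertices" `v^X` with `X ⊆ E(v)` (a set of non-diagonal edges incident to `v`), and
"edge vertices" `e^0, e^1` for each edge `e` of `K_k`. -/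
def CFIVert (k : ℕ) : Type :=
  {p : Fin k × Set (Sym2 (Fin k)) // ∀ e ∈ p.2, ¬ e.IsDiag ∧ p.1 ∈ e} ⊕
    ({e : Sym2 (Fin k) // ¬ e.IsDiag} × Bool)

/-- The CFI-enlarged graph `X(K_k)`: `v^X — e^1` iff `e ∈ X`, `v^X — e^0` iff `e ∉ X`
(for `e ∈ E(v)`), and `e^0 — e^1` for every edge `e`. -/
def CFIGraph (k : ℕ) : SimpleGraph (CFIVert k) where
  Adj a b :=
    match a, b with
    | .inl ⟨⟨v, X⟩, _⟩, .inr (e, i) => v ∈ e.1 ∧ (i = true ↔ e.1 ∈ X)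
    | .inr (e, i), .inl ⟨⟨v, X⟩, _⟩ => v ∈ e.1 ∧ (i = true ↔ e.1 ∈ X)
    | .inr (e, i), .inr (f, j) => e = f ∧ i ≠ j
    | .inl _, .inl _ => False
  symm := by
    constructor
    rintro (⟨⟨v, X⟩, hX⟩ | ⟨e, i⟩) (⟨⟨w, Y⟩, hY⟩ | ⟨f, j⟩) h
    · exact h
    · exact h
    · exact h
    · exact ⟨h.1.symm, h.2.symm⟩
  loopless := by
    constructor
    rintro (⟨⟨v, X⟩, hX⟩ | ⟨e, i⟩) h
    · exact h
    · exact h.2 rfl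

/-- The coloring of the CFI-enlarged graph: each vertex is colored by the node or edge of
the base graph it comes from. -/
def cfiColor (k : ℕ) : CFIVert k → (Fin k) ⊕ {e : Sym2 (Fin k) // ¬ e.IsDiag} :=
  fun a =>
    match a with
    | .inl ⟨⟨v, _⟩, _⟩ => .inl v
    | .inr (e, _) => .inr e

/-- The explicit candidate automorphism `h_F`: it flips `e^0 ↔ e^1` for `e ∈ F` and maps
`v^X` to `v^{X △ (F ∩ E(v))}`. -/
noncomputable def cfiAut (k : ℕ) (F : Set (Sym2 (Fin k))) (hF : ∀ e ∈ F, ¬ e.IsDiag) :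
    CFIVert k → CFIVert k :=
  fun a =>
    match a with
    | .inl ⟨⟨v, X⟩, hX⟩ =>
        .inl ⟨⟨v, symmDiff X (F ∩ {e | v ∈ e})⟩, by
          intro e he
          rw [Set.mem_symmDiff] at he
          rcases he with ⟨heX, _⟩ | ⟨⟨heF, hev⟩, _⟩
          · exact hX e heX
          · exact ⟨hF e heF, hev⟩⟩
    | .inr (e, i) => .inr (e, if e.1 ∈ F then !i else i)

section Aux
variable (k : ℕ) (F : Set (Sym2 (Fin k))) (hF : ∀ e ∈ F, ¬ e.IsDiag)

lemma cfi_inr_inj {a b : ({e : Sym2 (Fin k) // ¬ e.IsDiag} × Bool)} :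
    (Sum.inr a : CFIVert k) = Sum.inr b ↔ a = b :=
  (Sum.inr_injective (α := {p : Fin k × Set (Sym2 (Fin k)) //
      ∀ e ∈ p.2, ¬ e.IsDiag ∧ p.1 ∈ e})).eq_iff

lemma cfiAut_invol : Function.Involutive (cfiAut k F hF) := by
  rintro (⟨⟨v, X⟩, hX⟩ | ⟨e, i⟩)
  · simp only [cfiAut]
    congr 1
    apply Subtype.ext
    refine Prod.ext rfl ?_
    simp [symmDiff_symmDiff_cancel_right]
  · simp only [cfiAut]
    by_cases h : e.1 ∈ F <;> simp [h] <;> rfl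

lemma cfiAut_adj : ∀ a b, (CFIGraph k).Adj a b →
    (CFIGraph k).Adj (cfiAut k F hF a) (cfiAut k F hF b) := by
  rintro (⟨⟨v, X⟩, hX⟩ | ⟨e, i⟩) (⟨⟨w, Y⟩, hY⟩ | ⟨f, j⟩) h
  · exact h.elim
  · obtain ⟨hv, hi⟩ := h
    refine ⟨hv, ?_⟩
    cases j <;> by_cases hfF : f.1 ∈ F <;> simp_all [Set.mem_symmDiff]
  · obtain ⟨hv, hi⟩ := h
    refine ⟨hv, ?_⟩
    cases i <;> by_cases hfF : e.1 ∈ F <;> simp_all [Set.mem_symmDiff]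
  · obtain ⟨hef, hij⟩ := h
    subst hef
    refine ⟨rfl, ?_⟩
    by_cases hfF : e.1 ∈ F <;> simp [hfF, hij]

noncomputable def cfiAutIso : CFIGraph k ≃g CFIGraph k where
  toEquiv := (cfiAut_invol k F hF).toPerm _
  map_rel_iff' := by
    intro a b
    constructor
    · intro h
      have h' : (CFIGraph k).Adj (cfiAut k F hF a) (cfiAut k F hF b) := h
      have := cfiAut_adj k F hF _ _ h'
      rwa [cfiAut_invol k F hF a, cfiAut_invol k F hF b] at this
    · exact cfiAut_adj k F hF a b

@[simp] lemma cfiAutIso_apply (a : CFIVert k) : cfiAutIso k F hF a = cfiAut k F hF a := rfl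

lemma cfiAutIso_color : ∀ a, cfiColor k (cfiAutIso k F hF a) = cfiColor k a := by
  rintro (⟨⟨v, X⟩, hX⟩ | ⟨e, i⟩) <;> rfl

lemma cfiAutIso_flip (e : {e : Sym2 (Fin k) // ¬ e.IsDiag}) (i : Bool) :
    cfiAutIso k F hF (Sum.inr (e, i)) = Sum.inr (e, !i) ↔ e.1 ∈ F := by
  by_cases h : e.1 ∈ F
  · cases i <;> exact iff_of_true (by show (Sum.inr (e, if e.1 ∈ F then _ else _) : CFIVert k) = _; rw [if_pos h]) h
  · cases i <;> change (Sum.inr (e, if e.1 ∈ F then _ else _) : CFIVert k) = _ ↔ _ <;> rw [if_neg h] <;>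
      exact iff_of_false
        (fun hq => by have hq' := (cfi_inr_inj k).mp hq; simp at hq') h

lemma cfiAut_unique (h : CFIGraph k ≃g CFIGraph k)
    (hc : ∀ a, cfiColor k (h a) = cfiColor k a)
    (hflip : ∀ (e : {e : Sym2 (Fin k) // ¬ e.IsDiag}) (i : Bool),
      h (Sum.inr (e, i)) = Sum.inr (e, !i) ↔ e.1 ∈ F) :
    ∀ a, h a = cfiAut k F hF a := by
  have hedge : ∀ (e : {e : Sym2 (Fin k) // ¬ e.IsDiag}) (i : Bool),
      h (Sum.inr (e, i)) = Sum.inr (e, if e.1 ∈ F then !i else i) := by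
    intro e i
    by_cases heF : e.1 ∈ F
    · simpa [heF] using (hflip e i).mpr heF
    · have hcol := hc (Sum.inr (e, i))
      rcases hhe : h (Sum.inr (e, i)) with ⟨⟨v, X⟩, hX⟩ | ⟨f, j⟩
      all_goals rw [hhe] at hcol
      · simp [cfiColor] at hcol
      · simp only [cfiColor, Sum.inr.injEq] at hcol
        subst hcol
        have hne : j ≠ !i := by
          intro hji
          exact heF ((hflip f i).mp (by rw [hhe, hji]))
        have hji : j = i := by cases i <;> cases j <;> simp_all
        rw [hji, if_neg heF]
  rintro (⟨⟨v, X⟩, hX⟩ | ⟨e, i⟩)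
  · have hcol := hc (Sum.inl ⟨⟨v, X⟩, hX⟩)
    rcases hha : h (Sum.inl ⟨⟨v, X⟩, hX⟩) with ⟨⟨w, Y⟩, hY⟩ | ⟨f, j⟩
    all_goals rw [hha] at hcol
    · simp only [cfiColor, Sum.inl.injEq] at hcol
      subst hcol
      have hYX : Y = symmDiff X (F ∩ {e | w ∈ e}) := by
        ext e
        by_cases hed : ¬ e.IsDiag ∧ w ∈ e
        · obtain ⟨hed1, hed2⟩ := hed
          set i : Bool := decide (e ∈ X) with hidef
          have hiX : i = true ↔ e ∈ X := by simp [hidef]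
          have hadj : (CFIGraph k).Adj (Sum.inl ⟨⟨w, X⟩, hX⟩) (Sum.inr (⟨e, hed1⟩, i)) :=
            ⟨hed2, hiX⟩
          have hadj2 := h.map_rel_iff.mpr hadj
          rw [hha, hedge ⟨e, hed1⟩ i] at hadj2
          have hY2 : (if e ∈ F then !i else i) = true ↔ e ∈ Y := hadj2.2
          rw [Set.mem_symmDiff]
          by_cases heF : e ∈ F <;> cases hiv : i <;> simp_all
        · push_neg at hed
          constructor
          · intro heY
            obtain ⟨h1, h2⟩ := hY e heY
            exact absurd h2 (hed h1)
          · intro hsd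
            rw [Set.mem_symmDiff] at hsd
            rcases hsd with ⟨h1, _⟩ | ⟨⟨h1, h2⟩, _⟩
            · obtain ⟨g1, g2⟩ := hX e h1
              exact absurd g2 (hed g1)
            · exact absurd h2 (hed (hF e h1))
      simp only [cfiAut]
      congr 1
      exact Subtype.ext (Prod.ext rfl hYX)
    · simp [cfiColor] at hcol
  · rw [hedge e i]
    rfl

end Aux

/-- For every subset `F` of edges of `K_k`, there is exactly one color-preserving
automorphism of the enlarged graph `X(K_k)` that flips precisely the edge vertices
`e^0, e^1` for `e ∈ F`; moreover it is given by `h_F(e^i) = e^{1-i}` for `e ∈ F`,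
`h_F(e^i) = e^i` for `e ∉ F`, and `h_F(v^X) = v^{X △ (F ∩ E(v))}`. -/
theorem stmt_11 (k : ℕ) (F : Set (Sym2 (Fin k))) (hF : ∀ e ∈ F, ¬ e.IsDiag) :
    (∃! h : CFIGraph k ≃g CFIGraph k,
        (∀ a, cfiColor k (h a) = cfiColor k a) ∧
        (∀ (e : {e : Sym2 (Fin k) // ¬ e.IsDiag}) (i : Bool),
          h (Sum.inr (e, i)) = Sum.inr (e, !i) ↔ e.1 ∈ F)) ∧
    (∀ h : CFIGraph k ≃g CFIGraph k,
        ((∀ a, cfiColor k (h a) = cfiColor k a) ∧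
          (∀ (e : {e : Sym2 (Fin k) // ¬ e.IsDiag}) (i : Bool),
            h (Sum.inr (e, i)) = Sum.inr (e, !i) ↔ e.1 ∈ F)) →
        ∀ a, h a = cfiAut k F hF a) := by
  refine ⟨⟨cfiAutIso k F hF, ⟨cfiAutIso_color k F hF, cfiAutIso_flip k F hF⟩, ?_⟩,
    fun h hh => cfiAut_unique k F hF h hh.1 hh.2⟩
  intro h ⟨hc, hfl⟩
  ext a
  exact cfiAut_unique k F hF h hc hfl a
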